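/- Let X be an extremally disconnected (completely regular Hausdorff) space, U, V ⊆ X nonempty disjoint open sets, and f : U → V a homeomorphism. Then there exists a self-homeomorphism F of βX such that F restricted to U equals f, F restricted to V equals f⁻¹, and F is the identity on βX \ (closure(U) ∪ closure(V)) (closures in βX). -/

import Mathlib

open Set Filter Topology Function

/-- A free ultrafilter on ℕ: one containing no singleton. -/
def FreeUF (p : Ultrafilter ℕ) : Prop := ∀ n : ℕ, ({n} : Set ℕ) ∉ p

/-- `l` is the `p`-limit of the sequence `x`. -/
def PLim {X : Type*} [TopologicalSpace X] (p : Ultrafilter ℕ) (x : ℕ → X) (l : X) : Prop :=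
  Filter.Tendsto x (p : Filter ℕ) (nhds l)

/-- A βω-space: the closure of any countably infinite discrete subset with compact closure
is homeomorphic to βℕ. -/
def BetaOmegaSpace (X : Type*) [TopologicalSpace X] : Prop :=
  ∀ M : Set X, M.Countable → M.Infinite → DiscreteTopology M → IsCompact (closure M) →
    Nonempty (closure M ≃ₜ StoneCech ℕ)

/-- Keisler–Rudin (Rudin–Keisler) order on ultrafilters on ℕ. -/
def RKle (p q : Ultrafilter ℕ) : Prop := ∃ f : ℕ → ℕ, Ultrafilter.map f q = p

/-- A homogeneous space. -/
def Homogeneous (X : Type*) [TopologicalSpace X] : Prop :=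
  ∀ x y : X, ∃ h : X ≃ₜ X, h x = y

set_option linter.unusedSectionVars false
set_option linter.unusedVariables false

section ED
variable {X : Type*} [TopologicalSpace X] [ExtremallyDisconnected X]

lemma myDisjClos {U V : Set X} (hU : IsOpen U) (hV : IsOpen V) (h : Disjoint U V) :
    Disjoint (closure U) (closure V) := by
  have h1 : ∀ x, x ∈ V → x ∉ closure U := by
    intro x hxV hxc
    rcases mem_closure_iff.mp hxc V hV hxV with ⟨y, hyV, hyU⟩
    exact h.ne_of_mem hyU hyV rfl
  have hclU : IsClosed (closure U)ᶜ := (ExtremallyDisconnected.open_closure U hU).isClosed_compl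
  have h2 : closure V ⊆ (closure U)ᶜ := closure_minimal (fun x hx => h1 x hx) hclU
  exact disjoint_compl_right.mono_right h2
end ED

section Ext
variable {X : Type*} [TopologicalSpace X] [ExtremallyDisconnected X]
variable {K : Type*} [TopologicalSpace K] [CompactSpace K] [T2Space K]

/-- Extension of a map continuous on an open set `U` of an extremally disconnected space
to a map continuous on all of `X`, agreeing with `ψ` on `U` and with `d` off `closure U`. -/
noncomputable def edExt (ψ d : X → K) (U : Set X) (x : X) : K :=
  letI := Classical.dec (𝓝[U] x).NeBot
  if h : (𝓝[U] x).NeBot then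
    haveI := h
    ((Ultrafilter.of (𝓝[U] x)).map ψ).lim
  else d x

lemma edExt_eq_of_not_mem {ψ d : X → K} {U : Set X} {x : X} (hx : x ∉ closure U) :
    edExt ψ d U x = d x := by
  rw [mem_closure_iff_nhdsWithin_neBot] at hx
  simp only [edExt]
  rw [dif_neg hx]

lemma edExt_eq_of_mem_closure {ψ d : X → K} {U : Set X} {x : X} (hx : x ∈ closure U) :
    haveI : (𝓝[U] x).NeBot := mem_closure_iff_nhdsWithin_neBot.mp hx
    edExt ψ d U x = ((Ultrafilter.of (𝓝[U] x)).map ψ).lim := by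
  have h : (𝓝[U] x).NeBot := mem_closure_iff_nhdsWithin_neBot.mp hx
  simp only [edExt]
  rw [dif_pos h]

lemma edExt_eq_on {ψ d : X → K} {U : Set X} (hψ : ContinuousOn ψ U) {x : X} (hx : x ∈ U) :
    edExt ψ d U x = ψ x := by
  have hxc : x ∈ closure U := subset_closure hx
  haveI h : (𝓝[U] x).NeBot := mem_closure_iff_nhdsWithin_neBot.mp hxc
  rw [edExt_eq_of_mem_closure hxc]
  have h1 : (((Ultrafilter.of (𝓝[U] x)).map ψ) : Filter K) ≤ 𝓝 (ψ x) :=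
    le_trans (Filter.map_mono (Ultrafilter.of_le _)) (hψ x hx)
  have h2 : (((Ultrafilter.of (𝓝[U] x)).map ψ) : Filter K) ≤
      𝓝 ((Ultrafilter.of (𝓝[U] x)).map ψ).lim := Ultrafilter.le_nhds_lim _
  exact eq_of_nhds_neBot (Filter.neBot_of_le (le_inf h2 h1))

lemma edExt_tendsto {ψ d : X → K} {U : Set X} (hψ : ContinuousOn ψ U) (hUo : IsOpen U)
    {x : X} (hx : x ∈ closure U) :
    Tendsto ψ (𝓝[U] x) (𝓝 (edExt ψ d U x)) := by
  haveI h : (𝓝[U] x).NeBot := mem_closure_iff_nhdsWithin_neBot.mp hx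
  rw [edExt_eq_of_mem_closure hx]
  set a := ((Ultrafilter.of (𝓝[U] x)).map ψ).lim with ha
  rw [tendsto_iff_ultrafilter]
  intro 𝒱 h𝒱
  have hVlim : (𝒱.map ψ : Filter K) ≤ 𝓝 (𝒱.map ψ).lim := Ultrafilter.le_nhds_lim _
  suffices hab : (𝒱.map ψ).lim = a by rw [← hab]; exact hVlim
  by_contra hne
  obtain ⟨Wb, Wa, hWbo, hWao, hb, haa, hWd⟩ := t2_separation hne
  -- the two preimage sets
  have hS1 : IsOpen (U ∩ ψ ⁻¹' Wa) := hψ.isOpen_inter_preimage hUo hWao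
  have hS2 : IsOpen (U ∩ ψ ⁻¹' Wb) := hψ.isOpen_inter_preimage hUo hWbo
  have hdisjS : Disjoint (U ∩ ψ ⁻¹' Wa) (U ∩ ψ ⁻¹' Wb) := by
    refine Set.disjoint_left.mpr ?_
    rintro y ⟨-, hy1⟩ ⟨-, hy2⟩
    exact hWd.ne_of_mem hy2 hy1 rfl
  have hmem : ∀ (𝒲 : Ultrafilter X) (c : K) (W : Set K), (𝒲 : Filter X) ≤ 𝓝[U] x →
      (𝒲.map ψ : Filter K) ≤ 𝓝 c → IsOpen W → c ∈ W → x ∈ closure (U ∩ ψ ⁻¹' W) := by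
    intro 𝒲 c W hle hlim hWo hcW
    have hU𝒲 : U ∈ 𝒲 := hle self_mem_nhdsWithin
    have hpre : ψ ⁻¹' W ∈ 𝒲 := hlim (hWo.mem_nhds hcW)
    rw [mem_closure_iff]
    intro O hOo hxO
    have hO𝒲 : O ∈ 𝒲 := (hle.trans nhdsWithin_le_nhds) (hOo.mem_nhds hxO)
    have : (O ∩ (U ∩ ψ ⁻¹' W)).Nonempty :=
      Ultrafilter.nonempty_of_mem (inter_mem hO𝒲 (inter_mem hU𝒲 hpre))
    exact this
  have hx1 : x ∈ closure (U ∩ ψ ⁻¹' Wa) :=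
    hmem _ a Wa (Ultrafilter.of_le _) (Ultrafilter.le_nhds_lim _) hWao haa
  have hx2 : x ∈ closure (U ∩ ψ ⁻¹' Wb) := hmem _ _ Wb h𝒱 hVlim hWbo hb
  exact (myDisjClos hS1 hS2 hdisjS).ne_of_mem hx1 hx2 rfl

lemma edExt_continuous {ψ d : X → K} {U : Set X} (hψ : ContinuousOn ψ U) (hUo : IsOpen U)
    (hd : Continuous d) : Continuous (edExt ψ d U) := by
  rw [continuous_iff_continuousAt]
  intro x
  by_cases hx : x ∈ closure U
  · -- continuity at points of closure U
    have hclo : IsOpen (closure U) := ExtremallyDisconnected.open_closure U hUo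
    intro W hW
    rw [Filter.mem_map]
    -- pick open W' with a ∈ W' and closure W' ⊆ W
    obtain ⟨C, hCmem, hCcl, hCsub⟩ := exists_mem_nhds_isClosed_subset hW
    set W' := interior C with hW'
    have hW'o : IsOpen W' := isOpen_interior
    have haW' : edExt ψ d U x ∈ W' := mem_interior_iff_mem_nhds.mpr hCmem
    have hclW' : closure W' ⊆ W := (closure_minimal interior_subset hCcl).trans hCsub
    have htd := edExt_tendsto (d := d) hψ hUo hx
    have hpre : ψ ⁻¹' W' ∈ 𝓝[U] x := htd (hW'o.mem_nhds haW')
    rw [mem_nhdsWithin] at hpre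
    obtain ⟨N, hNo, hxN, hNsub⟩ := hpre
    have hMo : IsOpen (N ∩ closure U) := hNo.inter hclo
    have hMx : x ∈ N ∩ closure U := ⟨hxN, hx⟩
    refine Filter.mem_of_superset (hMo.mem_nhds hMx) ?_
    rintro y ⟨hyN, hyc⟩
    haveI : (𝓝[U] y).NeBot := mem_closure_iff_nhdsWithin_neBot.mp hyc
    have htdy := edExt_tendsto (d := d) hψ hUo hyc
    have hev : ∀ᶠ z in 𝓝[U] y, ψ z ∈ W' := by
      filter_upwards [inter_mem_nhdsWithin U (hNo.mem_nhds hyN)] with z hz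
      exact hNsub ⟨hz.2, hz.1⟩
    have : edExt ψ d U y ∈ closure W' := mem_closure_of_tendsto htdy hev
    exact hclW' this
  · -- off closure U, edExt agrees with d
    have hopen : IsOpen (closure U)ᶜ := isClosed_closure.isOpen_compl
    have hev : edExt ψ d U =ᶠ[𝓝 x] d := by
      filter_upwards [hopen.mem_nhds hx] with y hy
      exact edExt_eq_of_not_mem hy
    exact (hd.continuousAt).congr hev.symm
end Ext


/-- In an extremally disconnected completely regular Hausdorff space, a
homeomorphism between disjoint open sets `U` and `V` extends to a self-homeomorphism of βX
which swaps `U` and `V` and is the identity off `cl U ∪ cl V` (closures in βX). -/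
theorem stmt_15 {X : Type*} [TopologicalSpace X] [T2Space X] [CompletelyRegularSpace X]
    [ExtremallyDisconnected X]
    (U V : Set X) (hU : IsOpen U) (hV : IsOpen V) (hUne : U.Nonempty) (hVne : V.Nonempty)
    (hdisj : U ∩ V = ∅) (f : ↥U ≃ₜ ↥V) :
    ∃ F : StoneCech X ≃ₜ StoneCech X,
      (∀ u : ↥U, F (stoneCechUnit (u : X)) = stoneCechUnit ((f u : X))) ∧
      (∀ v : ↥V, F (stoneCechUnit (v : X)) = stoneCechUnit ((f.symm v : X))) ∧
      (∀ z : StoneCech X,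
        z ∉ closure (stoneCechUnit '' U) ∪ closure (stoneCechUnit '' V) → F z = z) := by
  classical
  set u : X → StoneCech X := stoneCechUnit with hu
  have hdisj' : Disjoint U V := Set.disjoint_iff_inter_eq_empty.mpr hdisj
  have hDc : Disjoint (closure U) (closure V) := myDisjClos hU hV hdisj'
  -- the underlying swap maps on X
  set ψU : X → StoneCech X := fun x => if h : x ∈ U then u (f ⟨x, h⟩ : X) else u x with hψUdef
  set ψV : X → StoneCech X := fun x => if h : x ∈ V then u (f.symm ⟨x, h⟩ : X) else u x with hψVdef
  have hψU : ContinuousOn ψU U := by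
    rw [continuousOn_iff_continuous_restrict]
    have : U.domRestrict ψU = fun x : ↥U => u (f x : X) := by
      funext x
      simp only [Set.domRestrict_apply, hψUdef, dif_pos x.2, Subtype.coe_eta]
    rw [this]
    exact continuous_stoneCechUnit.comp (continuous_subtype_val.comp f.continuous)
  have hψV : ContinuousOn ψV V := by
    rw [continuousOn_iff_continuous_restrict]
    have : V.domRestrict ψV = fun x : ↥V => u (f.symm x : X) := by
      funext x
      simp only [Set.domRestrict_apply, hψVdef, dif_pos x.2, Subtype.coe_eta]
    rw [this]
    exact continuous_stoneCechUnit.comp (continuous_subtype_val.comp f.symm.continuous)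
  have hψUval : ∀ (x : X) (hx : x ∈ U), ψU x = u (f ⟨x, hx⟩ : X) := fun x hx => dif_pos hx
  have hψVval : ∀ (x : X) (hx : x ∈ V), ψV x = u (f.symm ⟨x, hx⟩ : X) := fun x hx => dif_pos hx
  set eU : X → StoneCech X := edExt ψU u U with heU
  set eV : X → StoneCech X := edExt ψV u V with heV
  have heUc : Continuous eU := edExt_continuous hψU hU continuous_stoneCechUnit
  have heVc : Continuous eV := edExt_continuous hψV hV continuous_stoneCechUnit
  -- the glued map
  set g : X → StoneCech X := fun x =>
    if x ∈ closure U then eU x else if x ∈ closure V then eV x else u x with hgdef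
  have hgU : ∀ x ∈ closure U, g x = eU x := fun x hx => if_pos hx
  have hgV : ∀ x ∈ closure V, g x = eV x := by
    intro x hx
    have hxU : x ∉ closure U := fun h => hDc.ne_of_mem h hx rfl
    simp only [hgdef, if_neg hxU, if_pos hx]
  have hgC : ∀ x, x ∉ closure U → x ∉ closure V → g x = u x := by
    intro x h1 h2; simp only [hgdef, if_neg h1, if_neg h2]
  have hclUo : IsOpen (closure U) := ExtremallyDisconnected.open_closure U hU
  have hclVo : IsOpen (closure V) := ExtremallyDisconnected.open_closure V hV
  have hgcont : Continuous g := by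
    rw [continuous_iff_continuousAt]
    intro x
    by_cases h1 : x ∈ closure U
    · exact heUc.continuousAt.congr
        (Filter.eventuallyEq_of_mem (hclUo.mem_nhds h1) fun y hy => (hgU y hy)).symm
    · by_cases h2 : x ∈ closure V
      · exact heVc.continuousAt.congr
          (Filter.eventuallyEq_of_mem (hclVo.mem_nhds h2) fun y hy => (hgV y hy)).symm
      · have hopen : IsOpen (closure U ∪ closure V)ᶜ :=
          (isClosed_closure.union isClosed_closure).isOpen_compl
        refine continuous_stoneCechUnit.continuousAt.congr ?_
        refine (Filter.eventuallyEq_of_mem (hopen.mem_nhds ?_) fun y hy => ?_).symm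
        · simp only [Set.mem_compl_iff, Set.mem_union]; tauto
        · simp only [Set.mem_compl_iff, Set.mem_union, not_or] at hy
          exact hgC y hy.1 hy.2
  set H : StoneCech X → StoneCech X := stoneCechExtend hgcont with hHdef
  have hHcont : Continuous H := continuous_stoneCechExtend hgcont
  have hHu : ∀ x : X, H (u x) = g x := fun x => congrFun (stoneCechExtend_extends hgcont) x
  -- values on U and V
  have hval_U : ∀ (x : X) (hx : x ∈ U), H (u x) = u (f ⟨x, hx⟩ : X) := by
    intro x hx
    rw [hHu, hgU x (subset_closure hx), heU, edExt_eq_on hψU hx, hψUval x hx]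
  have hval_V : ∀ (x : X) (hx : x ∈ V), H (u x) = u (f.symm ⟨x, hx⟩ : X) := by
    intro x hx
    rw [hHu, hgV x (subset_closure hx), heV, edExt_eq_on hψV hx, hψVval x hx]
  -- H ∘ eU = u on closure U
  have hHeU : ∀ x ∈ closure U, H (eU x) = u x := by
    have heq : Set.EqOn (H ∘ eU) u U := by
      intro y hy
      have h1 : eU y = u (f ⟨y, hy⟩ : X) := by rw [heU, edExt_eq_on hψU hy, hψUval y hy]
      have hfy : (f ⟨y, hy⟩ : X) ∈ V := (f ⟨y, hy⟩).2
      simp only [Function.comp_apply, h1, hval_V _ hfy]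
      congr 1
      have : f.symm ⟨(f ⟨y, hy⟩ : X), hfy⟩ = ⟨y, hy⟩ := by
        rw [Subtype.coe_eta]; exact f.symm_apply_apply _
      rw [this]
    exact fun x hx => heq.closure (hHcont.comp heUc) continuous_stoneCechUnit hx
  have hHeV : ∀ x ∈ closure V, H (eV x) = u x := by
    have heq : Set.EqOn (H ∘ eV) u V := by
      intro y hy
      have h1 : eV y = u (f.symm ⟨y, hy⟩ : X) := by rw [heV, edExt_eq_on hψV hy, hψVval y hy]
      have hfy : (f.symm ⟨y, hy⟩ : X) ∈ U := (f.symm ⟨y, hy⟩).2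
      simp only [Function.comp_apply, h1, hval_U _ hfy]
      congr 1
      have : f ⟨(f.symm ⟨y, hy⟩ : X), hfy⟩ = ⟨y, hy⟩ := by
        rw [Subtype.coe_eta]; exact f.apply_symm_apply _
      rw [this]
    exact fun x hx => heq.closure (hHcont.comp heVc) continuous_stoneCechUnit hx
  -- involutivity
  have hHH : Function.Involutive H := by
    have : H ∘ H = id := by
      apply stoneCech_hom_ext (hHcont.comp hHcont) continuous_id
      funext x
      simp only [Function.comp_apply, id_eq]
      rw [hHu]
      by_cases h1 : x ∈ closure U
      · rw [hgU x h1]; exact hHeU x h1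
      · by_cases h2 : x ∈ closure V
        · rw [hgV x h2]; exact hHeV x h2
        · rw [hgC x h1 h2, hHu, hgC x h1 h2]
    exact fun z => congrFun this z
  refine ⟨⟨hHH.toPerm H, hHcont, hHcont⟩, ?_, ?_, ?_⟩
  · intro x
    exact hval_U (x : X) x.2
  · intro x
    exact hval_V (x : X) x.2
  · intro z hz
    simp only [Set.mem_union, not_or] at hz
    obtain ⟨hz1, hz2⟩ := hz
    show H z = z
    have hS : IsClosed {w : StoneCech X | H w = w} := isClosed_eq hHcont continuous_id
    have hzmem : z ∈ closure {w : StoneCech X | H w = w} := by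
      rw [mem_closure_iff]
      intro O hOo hzO
      set R : Set (StoneCech X) := (closure (u '' U) ∪ closure (u '' V))ᶜ with hR
      have hRo : IsOpen R := (isClosed_closure.union isClosed_closure).isOpen_compl
      have hzR : z ∈ R := by simp only [hR, Set.mem_compl_iff, Set.mem_union]; tauto
      have hORo : IsOpen (O ∩ R) := hOo.inter hRo
      obtain ⟨x, hxO, hxR⟩ := denseRange_stoneCechUnit.exists_mem_open hORo ⟨z, hzO, hzR⟩
      simp only [hR, Set.mem_compl_iff, Set.mem_union, not_or] at hxR
      have hxU : x ∉ closure U := by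
        intro hx
        exact hxR.1 ((image_closure_subset_closure_image continuous_stoneCechUnit) ⟨x, hx, rfl⟩)
      have hxV : x ∉ closure V := by
        intro hx
        exact hxR.2 ((image_closure_subset_closure_image continuous_stoneCechUnit) ⟨x, hx, rfl⟩)
      exact ⟨u x, hxO, by rw [Set.mem_setOf_eq, hHu, hgC x hxU hxV]⟩
    rw [hS.closure_eq] at hzmem
    exact hzmem
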